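/- arXiv:0804.4014 — 2 statements merged into one kernel-verified Lean document; each statement's English description precedes it below -/
import Mathlib

section
/- Let b₁,...,bₙ ∈ ℝ^m be an LLL-reduced basis of the lattice L, let 1 ≤ k ≤ n, and let d₁,...,d_k be arbitrary linearly independent vectors in L. Then det L(b₁,...,b_k) ≤ 2^{k(n−k)/2} · det L(d₁,...,d_k). -/
open scoped BigOperators RealInnerProductSpace

/-- The Gram–Schmidt orthogonalization `b₁*, …, bₙ*` of the vectors `b₁, …, bₙ`:
`bᵢ* = bᵢ - ∑_{j<i} μᵢⱼ bⱼ*`. -/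
noncomputable def gso {m n : ℕ} (b : Fin n → EuclideanSpace ℝ (Fin m)) :
    Fin n → EuclideanSpace ℝ (Fin m) :=
  haveI : WellFoundedLT (Fin n) := inferInstance
  InnerProductSpace.gramSchmidt ℝ b

/-- The Gram–Schmidt coefficient `μᵢⱼ = ⟨bᵢ, bⱼ*⟩ / ⟨bⱼ*, bⱼ*⟩`. -/
noncomputable def mu {m n : ℕ} (b : Fin n → EuclideanSpace ℝ (Fin m)) (i j : Fin n) : ℝ :=
  ⟪b i, gso b j⟫ / ⟪gso b j, gso b j⟫

/-- `b₁, …, bₙ` is LLL-reduced: `|μⱼᵢ| ≤ 1/2` for `i < j`, and the exchange condition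
`‖bⱼ* + μ_{j,j-1} b_{j-1}*‖² ≥ (3/4) ‖b_{j-1}*‖²` for consecutive indices `i + 1 = j`. -/
def LLLReduced {m n : ℕ} (b : Fin n → EuclideanSpace ℝ (Fin m)) : Prop :=
  (∀ i j : Fin n, i < j → |mu b j i| ≤ 1 / 2) ∧
  (∀ i j : Fin n, (i : ℕ) + 1 = (j : ℕ) →
    (3 / 4 : ℝ) * ‖gso b i‖ ^ 2 ≤ ‖gso b j + mu b j i • gso b i‖ ^ 2)

/-- Membership in the lattice generated by `b₁, …, bₙ`: an integer linear combination. -/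
def inLattice {m n : ℕ} (b : Fin n → EuclideanSpace ℝ (Fin m))
    (x : EuclideanSpace ℝ (Fin m)) : Prop :=
  ∃ c : Fin n → ℤ, x = ∑ i, (c i : ℝ) • b i

/-- The determinant of the lattice generated by `d₁, …, d_k`:
`√(det DᵀD)`, i.e. the square root of the Gram determinant. -/
noncomputable def latticeDet {m k : ℕ} (d : Fin k → EuclideanSpace ℝ (Fin m)) : ℝ :=
  Real.sqrt (Matrix.det (Matrix.of fun i j => ⟪d i, d j⟫))

instance myFinWF (n : ℕ) : WellFoundedLT (Fin n) := inferInstance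

open Finset Matrix

variable {m k n : ℕ}

local notation "E" => EuclideanSpace ℝ (Fin m)

theorem step1 (A : Matrix (Fin k) (Fin n) ℝ) (B : Matrix (Fin n) (Fin k) ℝ) :
    (A * B).det = ∑ g : Fin k → Fin n, (∏ i, A i (g i)) * (B.submatrix g id).det := by
  have h : (A * B).det
      = (Matrix.detRowAlternating (R := ℝ) (n := Fin k)).toMultilinearMap
        (fun i => ∑ t, A i t • B t) := by
    congr 1
    ext i j
    simp [Matrix.mul_apply, Finset.sum_apply]
  rw [h, MultilinearMap.map_sum]
  refine Finset.sum_congr rfl fun g _ => ?_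
  rw [MultilinearMap.map_smul_univ]
  rfl

noncomputable def sortOf (g : Fin k → Fin n) : Fin k → Fin n := by
  classical
  exact if h : (Finset.univ.image g).card = k then ⇑((Finset.univ.image g).orderEmbOfFin h) else g

theorem sortOf_comp (f : Fin k → Fin n) (hf : StrictMono f) (σ : Equiv.Perm (Fin k)) :
    sortOf (f ∘ σ) = f := by
  classical
  have himg : Finset.univ.image (f ∘ σ) = Finset.univ.image f := by
    ext x; simp [Function.comp]
    constructor
    · rintro ⟨i, rfl⟩; exact ⟨σ i, rfl⟩
    · rintro ⟨i, rfl⟩; exact ⟨σ.symm i, by simp⟩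
  have hcard : (Finset.univ.image (f ∘ σ)).card = k := by
    rw [himg, Finset.card_image_of_injective _ hf.injective, Finset.card_univ, Fintype.card_fin]
  rw [sortOf, dif_pos hcard]
  exact (Finset.orderEmbOfFin_unique hcard
    (fun x => himg.symm ▸ Finset.mem_image_of_mem f (Finset.mem_univ x)) hf).symm

theorem cauchyBinet (A : Matrix (Fin k) (Fin n) ℝ) (B : Matrix (Fin n) (Fin k) ℝ) :
    (A * B).det = ∑ f ∈ Finset.univ.filter (fun f : Fin k → Fin n => StrictMono f),
      (A.submatrix id f).det * (B.submatrix f id).det := by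
  classical
  rw [step1]
  rw [← Finset.sum_filter_add_sum_filter_not Finset.univ (fun g => Function.Injective g)]
  have h0 : ∑ g ∈ univ.filter (fun g : Fin k → Fin n => ¬ Function.Injective g),
      (∏ i, A i (g i)) * (B.submatrix g id).det = 0 := by
    refine Finset.sum_eq_zero fun g hg => ?_
    simp only [mem_filter, mem_univ, true_and] at hg
    rw [Function.not_injective_iff] at hg
    obtain ⟨i, j, hij, hne⟩ := hg
    rw [Matrix.det_zero_of_row_eq hne (by ext t; simp [hij])]
    ring
  rw [h0, add_zero]
  have hmap : ∀ g ∈ univ.filter (fun g : Fin k → Fin n => Function.Injective g),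
      sortOf g ∈ univ.filter (fun f : Fin k → Fin n => StrictMono f) := by
    intro g hg
    simp only [mem_filter, mem_univ, true_and] at hg ⊢
    have hcard : (Finset.univ.image g).card = k := by
      rw [Finset.card_image_of_injective _ hg, Finset.card_univ, Fintype.card_fin]
    rw [sortOf, dif_pos hcard]
    exact ((Finset.univ.image g).orderEmbOfFin hcard).strictMono
  rw [← Finset.sum_fiberwise_of_maps_to hmap]
  refine Finset.sum_congr rfl fun f hf => ?_
  simp only [mem_filter, mem_univ, true_and] at hf
  -- fiber sum equals sum over permutations
  have hbij : ∑ g ∈ (univ.filter (fun g : Fin k → Fin n => Function.Injective g)).filter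
        (fun g => sortOf g = f),
      (∏ i, A i (g i)) * (B.submatrix g id).det
      = ∑ σ : Equiv.Perm (Fin k), (∏ i, A i (f (σ i))) * (B.submatrix (f ∘ σ) id).det := by
    refine (Finset.sum_bij (s := (Finset.univ : Finset (Equiv.Perm (Fin k))))
      (t := (univ.filter (fun g : Fin k → Fin n => Function.Injective g)).filter
        (fun g => sortOf g = f))
      (f := fun σ => (∏ i, A i (f (σ i))) * (B.submatrix (f ∘ σ) id).det)
      (g := fun g => (∏ i, A i (g i)) * (B.submatrix g id).det)
      (i := fun σ _ => f ∘ σ) ?_ ?_ ?_ ?_).symm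
    · intro σ _
      simp only [mem_filter, mem_univ, true_and]
      exact ⟨hf.injective.comp σ.injective, sortOf_comp f hf σ⟩
    · intro σ _ τ _ h
      ext i
      exact congrArg Fin.val (hf.injective (congrFun h i))
    · intro g hg
      simp only [mem_filter, mem_univ, true_and] at hg
      obtain ⟨hginj, hgsort⟩ := hg
      have hcard : (Finset.univ.image g).card = k := by
        rw [Finset.card_image_of_injective _ hginj, Finset.card_univ, Fintype.card_fin]
      have hfeq : f = ⇑((Finset.univ.image g).orderEmbOfFin hcard) := by
        rw [← hgsort, sortOf, dif_pos hcard]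
      have hu : ∀ i, ∃ j : Fin k, f j = g i := by
        intro i
        have hmem : g i ∈ Finset.univ.image g := Finset.mem_image_of_mem g (Finset.mem_univ i)
        refine ⟨((Finset.univ.image g).orderIsoOfFin hcard).symm ⟨g i, hmem⟩, ?_⟩
        rw [hfeq, ← Finset.coe_orderIsoOfFin_apply]
        exact congrArg Subtype.val
          (((Finset.univ.image g).orderIsoOfFin hcard).apply_symm_apply ⟨g i, hmem⟩)
      choose u hu using hu
      have huinj : Function.Injective u := by
        intro a b hab
        apply hginj
        rw [← hu a, ← hu b, hab]
      refine ⟨Equiv.ofBijective u (Finite.injective_iff_bijective.mp huinj), mem_univ _, ?_⟩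
      ext i
      simp [Equiv.ofBijective, hu i]
    · intro σ _; rfl
  rw [hbij]
  have hsub : ∀ σ : Equiv.Perm (Fin k),
      (B.submatrix (f ∘ σ) id) = (B.submatrix f id).submatrix σ id := fun _ => rfl
  have : ∀ σ : Equiv.Perm (Fin k),
      (∏ i, A i (f (σ i))) * (B.submatrix (f ∘ σ) id).det
      = ((Equiv.Perm.sign σ : ℤ) : ℝ) * (∏ i, A i (f (σ i))) * (B.submatrix f id).det := by
    intro σ
    rw [hsub, Matrix.det_permute]
    push_cast
    ring
  rw [Finset.sum_congr rfl (fun σ _ => this σ), ← Finset.sum_mul]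
  congr 1
  rw [← Matrix.det_transpose]
  rw [Matrix.det_apply']
  refine Finset.sum_congr rfl fun σ _ => ?_
  simp [Matrix.transpose_apply]


lemma gso_eq (b : Fin n → E) : gso b = InnerProductSpace.gramSchmidt ℝ b := rfl

lemma inner_sum_smul_sum_smul (u : Fin n → E) (h : ∀ s t, s ≠ t → ⟪u s, u t⟫ = 0)
    (x y : Fin n → ℝ) :
    ⟪∑ s, x s • u s, ∑ t, y t • u t⟫ = ∑ s, x s * y s * ‖u s‖ ^ 2 := by
  rw [sum_inner]
  refine Finset.sum_congr rfl fun s _ => ?_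
  rw [inner_sum]
  rw [Finset.sum_eq_single s]
  · rw [real_inner_smul_left, real_inner_smul_right, real_inner_self_eq_norm_sq]; ring
  · intro t _ hts
    rw [real_inner_smul_left, real_inner_smul_right, h s t (Ne.symm hts)]; ring
  · intro hs; exact absurd (mem_univ s) hs

lemma inner_self_gso (f : Fin n → E) (i : Fin n) : ⟪f i, gso f i⟫ = ⟪gso f i, gso f i⟫ := by
  have hd := InnerProductSpace.gramSchmidt_def'' ℝ f i
  conv_lhs => rw [hd]
  rw [inner_add_left, sum_inner, gso_eq, add_eq_left]
  refine Finset.sum_eq_zero fun s hs => ?_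
  rw [real_inner_smul_left, InnerProductSpace.gramSchmidt_orthogonal ℝ f (Finset.mem_Iio.mp hs).ne, mul_zero]

lemma inner_gso_zero_of_lt (f : Fin n → E) {i s : Fin n} (his : i < s) :
    ⟪f i, gso f s⟫ = 0 := by
  rw [real_inner_comm, gso_eq]
  exact InnerProductSpace.gramSchmidt_inv_triangular ℝ f his

/-- the coefficient matrix of `f` in terms of its Gram-Schmidt vectors -/
noncomputable def coeffMat (f : Fin n → E) : Matrix (Fin n) (Fin n) ℝ :=
  Matrix.of fun i s => ⟪f i, gso f s⟫ / ⟪gso f s, gso f s⟫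

lemma coeffMat_diag (f : Fin n → E) (i : Fin n) (h : gso f i ≠ 0) : coeffMat f i i = 1 := by
  rw [coeffMat, Matrix.of_apply, inner_self_gso, div_self]
  rwa [inner_self_ne_zero]

lemma coeffMat_zero (f : Fin n → E) {i s : Fin n} (his : i < s) : coeffMat f i s = 0 := by
  rw [coeffMat, Matrix.of_apply, inner_gso_zero_of_lt f his, zero_div]

lemma gso_repr (f : Fin n → E) (i : Fin n) :
    f i = ∑ s, coeffMat f i s • gso f s := by
  have hd := InnerProductSpace.gramSchmidt_def'' ℝ f i
  rw [← Finset.sum_subset (Finset.subset_univ (insert i (Iio i)))]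
  · rw [Finset.sum_insert (by simp)]
    conv_lhs => rw [hd]
    congr 1
    · by_cases h : gso f i = 0
      · simp only [gso_eq] at h ⊢
        rw [h, smul_zero]
      · rw [coeffMat_diag f i h, one_smul, gso_eq]
    · refine Finset.sum_congr rfl fun s hs => ?_
      have hsi : s < i := Finset.mem_Iio.mp hs
      congr 1
      rw [coeffMat, Matrix.of_apply, real_inner_comm (f i), gso_eq, real_inner_self_eq_norm_sq]
      simp only [RCLike.ofReal_real_eq_id, id_eq]
  · intro s _ hs
    simp only [Finset.mem_insert, Finset.mem_Iio] at hs
    push_neg at hs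
    have : i < s := lt_of_le_of_ne hs.2 (Ne.symm hs.1)
    rw [coeffMat_zero f this, zero_smul]

lemma det_gram_eq_prod (f : Fin n → E) (hf : LinearIndependent ℝ f) :
    Matrix.det (Matrix.of fun i j => ⟪f i, f j⟫) = ∏ i, ‖gso f i‖ ^ 2 := by
  have key : (Matrix.of fun i j => ⟪f i, f j⟫)
      = coeffMat f * Matrix.diagonal (fun s => ‖gso f s‖ ^ 2) * (coeffMat f)ᵀ := by
    ext i j
    rw [Matrix.of_apply]
    nth_rewrite 1 [gso_repr f i, gso_repr f j]
    rw [inner_sum_smul_sum_smul (gso f) (fun s t hst => InnerProductSpace.gramSchmidt_orthogonal ℝ f hst)]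
    rw [Matrix.mul_apply]
    refine Finset.sum_congr rfl fun s _ => ?_
    rw [Matrix.mul_apply, Finset.sum_eq_single s]
    · rw [Matrix.diagonal_apply_eq, Matrix.transpose_apply]; ring
    · intro t _ hts; rw [Matrix.diagonal_apply_ne _ hts, mul_zero]
    · intro hs; exact absurd (mem_univ s) hs
  rw [key, Matrix.det_mul, Matrix.det_mul, Matrix.det_transpose]
  have hdetL : (coeffMat f).det = 1 := by
    rw [Matrix.det_of_lowerTriangular (coeffMat f)
      (fun i s his => coeffMat_zero f (by exact his))]
    exact Finset.prod_eq_one fun i _ =>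
      coeffMat_diag f i (InnerProductSpace.gramSchmidt_ne_zero _ hf)
  rw [hdetL, Matrix.det_diagonal, one_mul, mul_one]

lemma gso_prefix (hkn : k ≤ n) (b : Fin n → E) (i : Fin k) :
    gso (fun j : Fin k => b (Fin.castLE hkn j)) i = gso b (Fin.castLE hkn i) := by
  induction i using (wellFounded_lt (α := Fin k)).induction with
  | _ i IH =>
    rw [gso_eq, gso_eq, InnerProductSpace.gramSchmidt_def, InnerProductSpace.gramSchmidt_def]
    congr 1
    refine Finset.sum_nbij' (i := fun j : Fin k => Fin.castLE hkn j)
      (j := fun s : Fin n => if h : (s : ℕ) < k then ⟨(s : ℕ), h⟩ else i) ?_ ?_ ?_ ?_ ?_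
    · intro a ha
      simp only [Finset.mem_Iio] at ha ⊢
      exact_mod_cast ha
    · intro s hs
      simp only [Finset.mem_Iio] at hs
      have hsi : (s : ℕ) < (i : ℕ) := hs
      have hsk : (s : ℕ) < k := lt_of_lt_of_le hsi (le_of_lt i.2)
      simp only [dif_pos hsk, Finset.mem_Iio]
      simpa [Fin.lt_def] using hsi
    · intro a ha
      have : ((Fin.castLE hkn a : Fin n) : ℕ) < k := lt_of_lt_of_le a.2 le_rfl
      simp only [dif_pos this]
      exact Fin.ext rfl
    · intro s hs
      simp only [Finset.mem_Iio] at hs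
      have hsi : (s : ℕ) < (i : ℕ) := hs
      have hsk : (s : ℕ) < k := lt_of_lt_of_le hsi (le_of_lt i.2)
      simp only [dif_pos hsk]
      exact Fin.ext rfl
    · intro a ha
      have hlt : a < i := Finset.mem_Iio.mp ha
      have hIH := IH a hlt
      rw [gso_eq, gso_eq] at hIH
      rw [hIH]

lemma gso_step (b : Fin n → E) (hred : LLLReduced b) {i j : Fin n} (hij : (i:ℕ) + 1 = j) :
    ‖gso b i‖ ^ 2 ≤ 2 * ‖gso b j‖ ^ 2 := by
  have h2 := hred.2 i j hij
  have hlt : i < j := by rw [Fin.lt_def]; omega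
  have h1 := hred.1 i j hlt
  have horth : ⟪gso b j, mu b j i • gso b i⟫ = 0 := by
    rw [real_inner_smul_right, gso_eq, InnerProductSpace.gramSchmidt_orthogonal ℝ b hlt.ne', mul_zero]
  rw [norm_add_sq_real, horth, norm_smul, Real.norm_eq_abs, mul_pow] at h2
  have hmu : |mu b j i| ^ 2 ≤ 1 / 4 := by
    nlinarith [abs_nonneg (mu b j i)]
  nlinarith [sq_nonneg ‖gso b i‖, sq_nonneg ‖gso b j‖]

lemma gso_decay (b : Fin n → E) (hred : LLLReduced b) :
    ∀ t : ℕ, ∀ i j : Fin n, (i:ℕ) + t = j → ‖gso b i‖ ^ 2 ≤ 2 ^ t * ‖gso b j‖ ^ 2 := by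
  intro t
  induction t with
  | zero => intro i j hij; have : i = j := by ext; omega
            rw [this]; norm_num
  | succ t IH =>
    intro i j hij
    have hi' : (i:ℕ) + 1 < n := by have := j.2; omega
    set i' : Fin n := ⟨(i:ℕ) + 1, hi'⟩ with hi'def
    have h1 : ‖gso b i‖ ^ 2 ≤ 2 * ‖gso b i'‖ ^ 2 := gso_step b hred rfl
    have h2 : ‖gso b i'‖ ^ 2 ≤ 2 ^ t * ‖gso b j‖ ^ 2 := IH i' j (by simp [hi'def]; omega)
    calc ‖gso b i‖ ^ 2 ≤ 2 * ‖gso b i'‖ ^ 2 := h1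
      _ ≤ 2 * (2 ^ t * ‖gso b j‖ ^ 2) := by nlinarith
      _ = 2 ^ (t+1) * ‖gso b j‖ ^ 2 := by ring

lemma strictMono_fin_diff {f : Fin k → Fin n} (hf : StrictMono f) {i j : Fin k} (hij : i ≤ j) :
    (j:ℕ) - (i:ℕ) ≤ ((f j : ℕ)) - ((f i : ℕ)) := by
  have hcard := Finset.card_le_card_of_injOn (s := Finset.Icc i j)
    (t := Finset.Icc (f i) (f j)) f
    (fun t ht => by
      rw [Finset.mem_coe, Finset.mem_Icc] at ht ⊢
      exact ⟨hf.monotone ht.1, hf.monotone ht.2⟩)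
    (hf.injective.injOn)
  simp only [Fin.card_Icc] at hcard
  have h1 : (i:ℕ) ≤ j := hij
  have h2 : (f i : ℕ) ≤ f j := hf.monotone hij
  omega

lemma det_submatrix_dominance {P : Matrix (Fin n) (Fin n) ℝ}
    (hP : ∀ j s : Fin n, j < s → P j s = 0)
    {g f : Fin k → Fin n} (hg : Monotone g) (hf : Monotone f) {i : Fin k} (hlt : g i < f i) :
    (P.submatrix g f).det = 0 := by
  rw [Matrix.det_apply']
  refine Finset.sum_eq_zero fun σ _ => ?_
  obtain ⟨t, hit, hσt⟩ : ∃ t : Fin k, i ≤ t ∧ σ t ≤ i := by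
    by_contra hc
    push_neg at hc
    have hcard := Finset.card_le_card_of_injOn σ
      (fun t ht => Finset.mem_Ioi.mpr (hc t (Finset.mem_Ici.mp ht)))
      (σ.injective.injOn)
    rw [Fin.card_Ici, Fin.card_Ioi] at hcard
    have := i.2
    omega
  refine mul_eq_zero_of_right _ (Finset.prod_eq_zero (Finset.mem_univ t) ?_)
  have : g (σ t) < f t := lt_of_le_of_lt (hg hσt) (lt_of_lt_of_le hlt (hf hit))
  exact hP _ _ this

theorem det_prefix_le_sublattice_det {m n k : ℕ} (hk1 : 1 ≤ k) (hkn : k ≤ n)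
    (b : Fin n → EuclideanSpace ℝ (Fin m))
    (hb : LinearIndependent ℝ b) (hred : LLLReduced b)
    (d : Fin k → EuclideanSpace ℝ (Fin m))
    (hd : LinearIndependent ℝ d) (hdL : ∀ i, inLattice b (d i)) :
    latticeDet (fun i : Fin k => b (Fin.castLE hkn i)) ≤
      2 ^ ((k : ℝ) * ((n : ℝ) - k) / 2) * latticeDet d := by
  classical
  choose c hc using hdL
  set C : Matrix (Fin k) (Fin n) ℝ := Matrix.of fun i j => (c i j : ℝ) with hCdef
  set P : Matrix (Fin n) (Fin n) ℝ := Matrix.of fun j s => coeffMat b j s * ‖gso b s‖ with hPdef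
  set A : Matrix (Fin k) (Fin n) ℝ := C * P with hAdef
  have hPtri : ∀ j s : Fin n, j < s → P j s = 0 := fun j s hjs => by
    simp [hPdef, coeffMat_zero b hjs]
  -- representation of d in the gso basis
  have hdrepr : ∀ i, d i = ∑ s, ((C * coeffMat b) i s) • gso b s := by
    intro i
    rw [hc i]
    have h1 : ∀ j : Fin n, (c i j : ℝ) • b j = ∑ s, ((c i j : ℝ) * coeffMat b j s) • gso b s := by
      intro j
      conv_lhs => rw [gso_repr b j]
      rw [Finset.smul_sum]
      exact Finset.sum_congr rfl fun s _ => smul_smul _ _ _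
    calc ∑ j, (c i j : ℝ) • b j
        = ∑ j, ∑ s, ((c i j : ℝ) * coeffMat b j s) • gso b s :=
          Finset.sum_congr rfl fun j _ => h1 j
      _ = ∑ s, ∑ j, ((c i j : ℝ) * coeffMat b j s) • gso b s := Finset.sum_comm
      _ = ∑ s, ((C * coeffMat b) i s) • gso b s := by
          refine Finset.sum_congr rfl fun s _ => ?_
          rw [← Finset.sum_smul, Matrix.mul_apply]
          rfl
  have hAentry : ∀ i s, A i s = (C * coeffMat b) i s * ‖gso b s‖ := by
    intro i s
    rw [hAdef, Matrix.mul_apply, Matrix.mul_apply, Finset.sum_mul]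
    exact Finset.sum_congr rfl fun t _ => by rw [hPdef, Matrix.of_apply, mul_assoc]
  have hgram : (Matrix.of fun i j => ⟪d i, d j⟫) = A * Aᵀ := by
    ext i j
    rw [Matrix.of_apply]
    rw [hdrepr i, hdrepr j,
      inner_sum_smul_sum_smul (gso b) (fun s t hst => InnerProductSpace.gramSchmidt_orthogonal ℝ b hst)]
    rw [Matrix.mul_apply]
    refine Finset.sum_congr rfl fun s _ => ?_
    rw [Matrix.transpose_apply, hAentry i s, hAentry j s]
    ring
  have hCB : (Matrix.of fun i j => ⟪d i, d j⟫).det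
      = ∑ f ∈ Finset.univ.filter (fun f : Fin k → Fin n => StrictMono f),
          ((A.submatrix id f).det) ^ 2 := by
    rw [hgram, cauchyBinet]
    refine Finset.sum_congr rfl fun f _ => ?_
    have : Aᵀ.submatrix f id = (A.submatrix id f)ᵀ := rfl
    rw [this, Matrix.det_transpose, sq]
  have hdpos : 0 < (Matrix.of fun i j => ⟪d i, d j⟫).det := by
    rw [det_gram_eq_prod d hd]
    exact Finset.prod_pos fun i _ =>
      pow_pos (norm_pos_iff.mpr (InnerProductSpace.gramSchmidt_ne_zero i hd)) 2
  -- the set of strictly monotone selections with nonzero integer minor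
  set Φ : Finset (Fin k → Fin n) :=
    (Finset.univ.filter (fun f : Fin k → Fin n => StrictMono f)).filter
      (fun f => (C.submatrix id f).det ≠ 0) with hΦdef
  have hsubprod : ∀ f : Fin k → Fin n, A.submatrix id f = C * (P.submatrix id f) := by
    intro f
    ext i j
    rw [Matrix.submatrix_apply, hAdef, Matrix.mul_apply, Matrix.mul_apply]
    rfl
  have hΦne : Φ.Nonempty := by
    rw [Finset.nonempty_iff_ne_empty]
    intro hempty
    have hzero : ∀ f ∈ Finset.univ.filter (fun f : Fin k → Fin n => StrictMono f),
        ((A.submatrix id f).det) ^ 2 = 0 := by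
      intro f hf0
      have hz : (C * (P.submatrix id f)).det = 0 := by
        rw [cauchyBinet]
        refine Finset.sum_eq_zero fun g hg => ?_
        have hCg : (C.submatrix id g).det = 0 := by
          by_contra hne
          have : g ∈ Φ := by rw [hΦdef, Finset.mem_filter]; exact ⟨hg, hne⟩
          rw [hempty] at this
          exact absurd this (Finset.notMem_empty g)
        rw [hCg, zero_mul]
      rw [hsubprod f, hz]
      norm_num
    rw [hCB, Finset.sum_eq_zero hzero] at hdpos
    exact lt_irrefl 0 hdpos
  obtain ⟨f₀, hf₀Φ, hf₀max⟩ := Φ.exists_max_image (fun f => ∑ i, ((f i : ℕ))) hΦne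
  rw [hΦdef, Finset.mem_filter, Finset.mem_filter] at hf₀Φ
  have hf₀SM : StrictMono f₀ := hf₀Φ.1.2
  have hf₀C : (C.submatrix id f₀).det ≠ 0 := hf₀Φ.2
  -- the key term evaluation
  have hA0 : (A.submatrix id f₀).det
      = (C.submatrix id f₀).det * ∏ i, ‖gso b (f₀ i)‖ := by
    rw [hsubprod f₀, cauchyBinet]
    rw [Finset.sum_eq_single f₀]
    · congr 1
      have hPP : (P.submatrix id f₀).submatrix f₀ id = P.submatrix f₀ f₀ := rfl
      rw [hPP, Matrix.det_of_lowerTriangular _ (fun i j hij => by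
        exact hPtri _ _ (hf₀SM (by exact hij)))]
      refine Finset.prod_congr rfl fun i _ => ?_
      rw [Matrix.submatrix_apply, hPdef, Matrix.of_apply,
        coeffMat_diag b _ (InnerProductSpace.gramSchmidt_ne_zero _ hb), one_mul]
    · intro g hg hgne
      rcases eq_or_ne (C.submatrix id g).det 0 with hCg | hCg
      · rw [hCg, zero_mul]
      · have hgΦ : g ∈ Φ := by rw [hΦdef, Finset.mem_filter]; exact ⟨hg, hCg⟩
        have hwle : ∑ i, ((g i : ℕ)) ≤ ∑ i, ((f₀ i : ℕ)) := hf₀max g hgΦ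
        have hgSM : StrictMono g := (Finset.mem_filter.mp hg).2
        obtain ⟨i, hi⟩ : ∃ i, g i < f₀ i := by
          by_contra h'
          push_neg at h'
          have hle : ∀ i ∈ Finset.univ, ((f₀ i : ℕ)) ≤ ((g i : ℕ)) := fun i _ => h' i
          have hsum : ∑ i, ((f₀ i : ℕ)) = ∑ i, ((g i : ℕ)) :=
            le_antisymm (Finset.sum_le_sum hle) hwle
          have hpt := (Finset.sum_eq_sum_iff_of_le hle).mp hsum
          exact hgne (funext fun i => Fin.ext ((hpt i (Finset.mem_univ i)).symm))
        have hPzero : ((P.submatrix id f₀).submatrix g id).det = 0 := by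
          have : (P.submatrix id f₀).submatrix g id = P.submatrix g f₀ := rfl
          rw [this]
          exact det_submatrix_dominance hPtri hgSM.monotone hf₀SM.monotone hi
        rw [hPzero, mul_zero]
    · intro hne
      exact absurd (Finset.mem_filter.mpr ⟨Finset.mem_univ f₀, hf₀SM⟩) hne
  -- integrality: det of C-minor has square at least 1
  have hCsq : 1 ≤ ((C.submatrix id f₀).det) ^ 2 := by
    set Cz : Matrix (Fin k) (Fin k) ℤ := Matrix.of fun i j => c i (f₀ j) with hCzdef
    have hmap : (Int.castRingHom ℝ) Cz.det = (C.submatrix id f₀).det := by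
      rw [RingHom.map_det]
      congr 1
    have hCz : Cz.det ≠ 0 := by
      intro h0
      apply hf₀C
      rw [← hmap, h0]
      simp
    have : 1 ≤ Cz.det ^ 2 := by
      rcases lt_or_gt_of_ne hCz with h | h
      · nlinarith
      · nlinarith
    calc (1:ℝ) = ((1:ℤ):ℝ) := by norm_num
      _ ≤ ((Cz.det ^ 2 : ℤ) : ℝ) := by exact_mod_cast this
      _ = ((C.submatrix id f₀).det) ^ 2 := by push_cast [← hmap]; simp [Int.cast_det]
  -- index bounds
  have hidx : ∀ i : Fin k, (i : ℕ) ≤ (f₀ i : ℕ) ∧ (f₀ i : ℕ) - (i : ℕ) ≤ n - k := by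
    intro i
    set zerok : Fin k := ⟨0, hk1⟩ with hzerok
    set lastk : Fin k := ⟨k - 1, by omega⟩ with hlastk
    have h0 : (zerok : ℕ) = 0 := rfl
    have hlastv : (lastk : ℕ) = k - 1 := rfl
    have hd1 := strictMono_fin_diff hf₀SM (i := zerok) (j := i) (by
      rw [Fin.le_def, h0]; omega)
    have hd2 := strictMono_fin_diff hf₀SM (i := i) (j := lastk) (by
      rw [Fin.le_def, hlastv]; have := i.2; omega)
    have hub : (f₀ lastk : ℕ) ≤ n - 1 := by
      have := (f₀ lastk).2; omega
    have hival : (i : ℕ) ≤ k - 1 := by have := i.2; omega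
    omega
  -- main chain of inequalities
  have key : ∏ i : Fin k, ‖gso b (Fin.castLE hkn i)‖ ^ 2
      ≤ 2 ^ (k * (n - k)) * (Matrix.of fun i j => ⟪d i, d j⟫).det := by
    have step1' : ∀ i : Fin k, ‖gso b (Fin.castLE hkn i)‖ ^ 2
        ≤ 2 ^ (n - k) * ‖gso b (f₀ i)‖ ^ 2 := by
      intro i
      have h1 := (hidx i).1
      have h2 := (hidx i).2
      have hdecay := gso_decay b hred ((f₀ i : ℕ) - (i : ℕ)) (Fin.castLE hkn i) (f₀ i) (by
        have hcast : ((Fin.castLE hkn i : Fin n) : ℕ) = (i : ℕ) := rfl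
        omega)
      refine hdecay.trans ?_
      have hpow : (2:ℝ) ^ ((f₀ i : ℕ) - (i : ℕ)) ≤ 2 ^ (n - k) :=
        pow_le_pow_right₀ one_le_two h2
      exact mul_le_mul_of_nonneg_right hpow (sq_nonneg _)
    calc ∏ i : Fin k, ‖gso b (Fin.castLE hkn i)‖ ^ 2
        ≤ ∏ i : Fin k, 2 ^ (n - k) * ‖gso b (f₀ i)‖ ^ 2 :=
          Finset.prod_le_prod (fun i _ => sq_nonneg _) (fun i _ => step1' i)
      _ = 2 ^ (k * (n - k)) * ∏ i : Fin k, ‖gso b (f₀ i)‖ ^ 2 := by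
          rw [Finset.prod_mul_distrib, Finset.prod_const, Finset.card_univ,
            Fintype.card_fin, ← pow_mul, Nat.mul_comm]
      _ ≤ 2 ^ (k * (n - k)) * (((C.submatrix id f₀).det) ^ 2 * ∏ i : Fin k, ‖gso b (f₀ i)‖ ^ 2) := by
          have hp : (0:ℝ) ≤ ∏ i : Fin k, ‖gso b (f₀ i)‖ ^ 2 :=
            Finset.prod_nonneg fun i _ => sq_nonneg _
          have h2p : (0:ℝ) < 2 ^ (k * (n - k)) := by positivity
          have hmul : ∏ i : Fin k, ‖gso b (f₀ i)‖ ^ 2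
              ≤ ((C.submatrix id f₀).det) ^ 2 * ∏ i : Fin k, ‖gso b (f₀ i)‖ ^ 2 := by
            nlinarith [mul_nonneg (sub_nonneg.mpr hCsq) hp]
          exact mul_le_mul_of_nonneg_left hmul (le_of_lt h2p)
      _ = 2 ^ (k * (n - k)) * ((A.submatrix id f₀).det) ^ 2 := by
          rw [hA0, mul_pow, Finset.prod_pow]
      _ ≤ 2 ^ (k * (n - k)) * (Matrix.of fun i j => ⟪d i, d j⟫).det := by
          rw [hCB]
          have hterm : ((A.submatrix id f₀).det) ^ 2
              ≤ ∑ f ∈ Finset.univ.filter (fun f : Fin k → Fin n => StrictMono f),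
                ((A.submatrix id f).det) ^ 2 :=
            Finset.single_le_sum (f := fun f => ((A.submatrix id f).det) ^ 2)
              (fun f _ => sq_nonneg _)
              (Finset.mem_filter.mpr ⟨Finset.mem_univ f₀, hf₀SM⟩)
          have : (0:ℝ) < 2 ^ (k * (n - k)) := by positivity
          nlinarith
  -- conclude
  have hpref : latticeDet (fun i : Fin k => b (Fin.castLE hkn i))
      = Real.sqrt (∏ i : Fin k, ‖gso b (Fin.castLE hkn i)‖ ^ 2) := by
    have hli : LinearIndependent ℝ (fun i : Fin k => b (Fin.castLE hkn i)) :=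
      hb.comp _ (Fin.castLE_injective hkn)
    rw [latticeDet, det_gram_eq_prod (fun i : Fin k => b (Fin.castLE hkn i)) hli]
    congr 1
    exact Finset.prod_congr rfl fun i _ => by rw [gso_prefix hkn b i]
  rw [hpref, latticeDet]
  refine le_trans (Real.sqrt_le_sqrt key) ?_
  rw [Real.sqrt_mul (by positivity)]
  have hcoef : Real.sqrt ((2:ℝ) ^ (k * (n - k))) = 2 ^ ((k : ℝ) * ((n : ℝ) - k) / 2) := by
    rw [Real.sqrt_eq_rpow, ← Real.rpow_natCast 2 (k * (n - k)), ← Real.rpow_mul (by norm_num)]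
    congr 1
    push_cast [Nat.cast_sub hkn]
    ring
  rw [hcoef]
end

section
/- Let b₁,...,bₙ ∈ ℝ^m be an LLL-reduced basis of the lattice L, let 1 ≤ k ≤ j ≤ n, and let d₁,...,d_j be arbitrary linearly independent vectors in L. Then det L(b₁,...,b_k) ≤ 2^{k(n−j)/2 + k(j−k)/4} · (det L(d₁,...,d_j))^{k/j}. -/
open scoped BigOperators RealInnerProductSpace

open Finset Matrix
open InnerProductSpace

section basic
variable {m n : ℕ} (b : Fin n → EuclideanSpace ℝ (Fin m))

lemma gso_orth {i j : Fin n} (h : i ≠ j) : ⟪gso b i, gso b j⟫ = 0 := by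
  haveI : WellFoundedLT (Fin n) := inferInstance
  exact gramSchmidt_orthogonal ℝ b h

lemma gso_castLE {k : ℕ} (h : k ≤ n) :
    ∀ i : Fin k, gso (fun i => b (Fin.castLE h i)) i = gso b (Fin.castLE h i) := by
  haveI : WellFoundedLT (Fin k) := inferInstance
  haveI : WellFoundedLT (Fin n) := inferInstance
  intro i
  induction' hi : (i : ℕ) using Nat.strong_induction_on with p IH generalizing i
  subst hi
  show gramSchmidt ℝ _ i = gramSchmidt ℝ b _
  rw [gramSchmidt_def, gramSchmidt_def]
  congr 1
  refine Finset.sum_nbij' (i := fun l : Fin k => Fin.castLE h l)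
    (j := fun l' : Fin n => if h' : (l' : ℕ) < k then ⟨(l' : ℕ), h'⟩ else i) ?_ ?_ ?_ ?_ ?_
  · intro l hl
    simp only [Finset.mem_Iio] at hl ⊢
    exact hl
  · intro l' hl'
    simp only [Finset.mem_Iio] at hl' ⊢
    have hk : (l' : ℕ) < k := lt_of_lt_of_le hl' (by exact i.2.le)
    rw [dif_pos hk]
    exact hl'
  · intro l hl; simp [l.2]
  · intro l' hl'
    simp only [Finset.mem_Iio] at hl'
    have hk : (l' : ℕ) < k := lt_of_lt_of_le hl' i.2.le
    show Fin.castLE h (if h' : (l' : ℕ) < k then (⟨(l' : ℕ), h'⟩ : Fin k) else i) = l'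
    rw [dif_pos hk]; ext; rfl
  · intro l hl
    simp only [Finset.mem_Iio] at hl
    have : gramSchmidt ℝ (fun i => b (Fin.castLE h i)) l = gramSchmidt ℝ b (Fin.castLE h l) :=
      IH (l : ℕ) (by exact hl) l rfl
    rw [this]

lemma inner_b_gso_zero {s r : Fin n} (h : s < r) : ⟪b s, gso b r⟫ = 0 := by
  haveI : WellFoundedLT (Fin n) := inferInstance
  rw [real_inner_comm]
  exact gramSchmidt_inv_triangular ℝ b h

lemma consecutive_step (hred : LLLReduced b) {i l : Fin n} (h : (i : ℕ) + 1 = (l : ℕ)) :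
    ‖gso b i‖ ^ 2 ≤ 2 * ‖gso b l‖ ^ 2 := by
  have hlt : i < l := by
    rw [Fin.lt_def]; omega
  have h1 := hred.1 i l hlt
  have h2 := hred.2 i l h
  have hexp : ‖gso b l + mu b l i • gso b i‖ ^ 2
      = ‖gso b l‖ ^ 2 + (mu b l i) ^ 2 * ‖gso b i‖ ^ 2 := by
    rw [norm_add_sq_real, real_inner_smul_right, gso_orth b (ne_of_gt hlt), norm_smul]
    simp only [mul_zero, add_zero, mul_pow, sq_abs, Real.norm_eq_abs]
  rw [hexp] at h2
  have hmu2 : (mu b l i) ^ 2 ≤ 1 / 4 := by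
    have := abs_nonneg (mu b l i)
    nlinarith [sq_abs (mu b l i)]
  nlinarith [sq_nonneg ‖gso b i‖]

lemma gso_chain (hred : LLLReduced b) {i l : Fin n} (h : i ≤ l) :
    ‖gso b i‖ ^ 2 ≤ 2 ^ ((l : ℕ) - (i : ℕ)) * ‖gso b l‖ ^ 2 := by
  obtain ⟨g, hg⟩ : ∃ g, (i : ℕ) + g = (l : ℕ) := ⟨(l : ℕ) - (i : ℕ), by omega⟩
  have hsub : (l : ℕ) - (i : ℕ) = g := by omega
  rw [hsub]
  clear hsub h
  induction g generalizing l with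
  | zero =>
    have : i = l := by apply Fin.ext; omega
    subst this; simp
  | succ g IH =>
    have hlt : (i : ℕ) + g < n := by omega
    set l' : Fin n := ⟨(i : ℕ) + g, hlt⟩ with hl'
    have h1 : ‖gso b i‖ ^ 2 ≤ 2 ^ g * ‖gso b l'‖ ^ 2 := IH (l := l') rfl
    have h2 : ‖gso b l'‖ ^ 2 ≤ 2 * ‖gso b l‖ ^ 2 :=
      consecutive_step b hred (by simp [hl']; omega)
    calc ‖gso b i‖ ^ 2 ≤ 2 ^ g * ‖gso b l'‖ ^ 2 := h1
      _ ≤ 2 ^ g * (2 * ‖gso b l‖ ^ 2) := by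
          have : (0:ℝ) < 2 ^ g := by positivity
          nlinarith
      _ = 2 ^ (g + 1) * ‖gso b l‖ ^ 2 := by ring


noncomputable def Tmat (b : Fin n → EuclideanSpace ℝ (Fin m)) : Matrix (Fin n) (Fin n) ℝ :=
  Matrix.of fun i l => if l < i then mu b i l else if i = l then 1 else 0

lemma mu_eq (i l : Fin n) : mu b i l = ⟪gso b l, b i⟫ / ‖gso b l‖ ^ 2 := by
  rw [mu, real_inner_comm, real_inner_self_eq_norm_sq]

lemma b_eq_sum (i : Fin n) : b i = ∑ l, Tmat b i l • gso b l := by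
  haveI : WellFoundedLT (Fin n) := inferInstance
  have h := gramSchmidt_def'' ℝ b i
  have hsub : ∑ l, Tmat b i l • gso b l = ∑ l ∈ Finset.Iic i, Tmat b i l • gso b l := by
    refine (Finset.sum_subset (Finset.subset_univ _) fun l _ hl => ?_).symm
    have hl' : i < l := by simpa using hl
    have : Tmat b i l = 0 := by
      simp only [Tmat, Matrix.of_apply, if_neg (asymm hl'), if_neg (ne_of_lt hl')]
    simp [this]
  rw [hsub, ← Finset.Iio_insert, Finset.sum_insert (by simp)]
  have hTii : Tmat b i i = 1 := by simp [Tmat]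
  rw [hTii, one_smul]
  have : ∀ l ∈ Finset.Iio i, Tmat b i l • gso b l
      = (⟪gso b l, b i⟫ / (‖gso b l‖ : ℝ) ^ 2) • gso b l := by
    intro l hl
    have hl' : l < i := Finset.mem_Iio.mp hl
    simp only [Tmat, Matrix.of_apply, if_pos hl', mu_eq]
  rw [Finset.sum_congr rfl this]
  exact gramSchmidt_def'' ℝ b i

lemma gram_entry (i i' : Fin n) :
    ⟪b i, b i'⟫ = ∑ l, Tmat b i l * Tmat b i' l * ‖gso b l‖ ^ 2 := by
  conv_lhs => rw [b_eq_sum b i, b_eq_sum b i']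
  rw [sum_inner]
  refine Finset.sum_congr rfl fun l _ => ?_
  rw [inner_sum, Finset.sum_eq_single l]
  · rw [real_inner_smul_left, real_inner_smul_right, real_inner_self_eq_norm_sq]; ring
  · intro r _ hr
    rw [real_inner_smul_left, real_inner_smul_right, gso_orth b (Ne.symm hr)]
    ring
  · simp

lemma detGram_eq_prod :
    (Matrix.of fun i i' => (⟪b i, b i'⟫ : ℝ)).det = ∏ l, ‖gso b l‖ ^ 2 := by
  have hM : (Matrix.of fun i i' => (⟪b i, b i'⟫ : ℝ))
      = Tmat b * Matrix.diagonal (fun l => ‖gso b l‖ ^ 2) * (Tmat b)ᵀ := by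
    ext i i'
    rw [Matrix.mul_apply]
    simp only [Matrix.mul_diagonal, Matrix.transpose_apply, Matrix.of_apply]
    rw [gram_entry b i i']
    exact Finset.sum_congr rfl fun l _ => by ring
  have hT : (Tmat b).det = 1 := by
    have htri : (Tmat b).BlockTriangular OrderDual.toDual := by
      intro i l h
      have h' : i < l := h
      simp only [Tmat, Matrix.of_apply, if_neg (asymm h'), if_neg (ne_of_lt h')]
    rw [Matrix.det_of_lowerTriangular _ htri]
    have : ∀ i : Fin n, Tmat b i i = 1 := fun i => by simp [Tmat]
    simp [this]
  rw [hM, Matrix.det_mul, Matrix.det_mul, Matrix.det_transpose, hT, Matrix.det_diagonal]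
  ring


end basic

noncomputable def iotaMap (n : ℕ) : (Fin n → ℤ) →ₗ[ℤ] (Fin (n+1) → ℤ) where
  toFun := fun x => Fin.snoc x 0
  map_add' := by
    intro x y; funext i
    refine Fin.lastCases ?_ (fun i => ?_) i <;> simp
  map_smul' := by
    intro c x; funext i
    refine Fin.lastCases ?_ (fun i => ?_) i <;> simp

lemma iota_of_last_zero {n : ℕ} (y : Fin (n+1) → ℤ) (hy : y (Fin.last n) = 0) :
    iotaMap n (fun i => y (Fin.castSucc i)) = y := by
  funext i
  refine Fin.lastCases ?_ (fun i => ?_) i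
  · simp [iotaMap, hy]
  · simp [iotaMap]

lemma echelon : ∀ (n : ℕ) (N : Submodule ℤ (Fin n → ℤ)),
    ∃ (r : ℕ) (w : Fin r → (Fin n → ℤ)) (t : Fin r → Fin n),
      StrictMono t ∧ (∀ l, w l (t l) ≠ 0) ∧ (∀ l s, t l < s → w l s = 0) ∧
      Submodule.span ℤ (Set.range w) = N := by
  intro n
  induction n with
  | zero =>
    intro N
    refine ⟨0, Fin.elim0, Fin.elim0, fun a => a.elim0, fun l => l.elim0, fun l => l.elim0, ?_⟩
    rw [Set.range_eq_empty, Submodule.span_empty]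
    refine (Submodule.eq_bot_iff N).mpr (fun x _ => Subsingleton.elim x 0) |>.symm
  | succ n IH =>
    intro N
    set π : (Fin (n+1) → ℤ) →ₗ[ℤ] ℤ := LinearMap.proj (Fin.last n) with hπ
    set ρ : (Fin (n+1) → ℤ) →ₗ[ℤ] (Fin n → ℤ) := LinearMap.funLeft ℤ ℤ Fin.castSucc with hρ
    set ι := iotaMap n with hι
    set I : Submodule ℤ ℤ := N.map π with hI
    haveI hIp : I.IsPrincipal := IsPrincipalIdealRing.principal I
    set g : ℤ := Submodule.IsPrincipal.generator I with hg
    have hIg : Submodule.span ℤ {g} = I := Submodule.IsPrincipal.span_singleton_generator I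
    have hker : ∀ y : Fin (n+1) → ℤ, y (Fin.last n) = 0 → ι (ρ y) = y := by
      intro y hy
      exact iota_of_last_zero y hy
    by_cases hg0 : g = 0
    · -- all last coordinates vanish
      have hlast : ∀ x ∈ N, x (Fin.last n) = 0 := by
        intro x hx
        have hxI : π x ∈ I := Submodule.mem_map_of_mem hx
        rw [← hIg, hg0, Submodule.span_zero_singleton, Submodule.mem_bot] at hxI
        exact hxI
      obtain ⟨r, w', t', hmono, hpiv, hzero, hspan⟩ := IH (N.map ρ)
      refine ⟨r, fun l => ι (w' l), fun l => (t' l).castSucc, ?_, ?_, ?_, ?_⟩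
      · intro a c hac
        exact Fin.castSucc_lt_castSucc_iff.mpr (hmono hac)
      · intro l
        show (Fin.snoc (w' l) 0 : Fin (n+1) → ℤ) _ ≠ 0
        rw [Fin.snoc_castSucc]
        exact hpiv l
      · intro l s
        refine Fin.lastCases ?_ (fun s' => ?_) s <;> intro hs
        · show (Fin.snoc (w' l) 0 : Fin (n+1) → ℤ) _ = 0
          rw [Fin.snoc_last]
        · show (Fin.snoc (w' l) 0 : Fin (n+1) → ℤ) _ = 0
          rw [Fin.snoc_castSucc]
          exact hzero l s' (Fin.castSucc_lt_castSucc_iff.mp hs)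
      · apply le_antisymm
        · rw [Submodule.span_le]
          rintro - ⟨l, rfl⟩
          obtain ⟨y, hyN, hyl⟩ : ∃ y ∈ N, ρ y = w' l := by
            have : w' l ∈ N.map ρ := by
              rw [← hspan]
              exact Submodule.subset_span (Set.mem_range_self l)
            exact Submodule.mem_map.mp this
          have heq : ι (w' l) = y := by rw [← hyl]; exact hker y (hlast y hyN)
          show ι (w' l) ∈ (N : Set (Fin (n+1) → ℤ))
          rw [heq]; exact hyN
        · intro x hx
          have h1 : ρ x ∈ Submodule.span ℤ (Set.range w') := by
            rw [hspan]; exact Submodule.mem_map_of_mem hx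
          have h2 : ι (ρ x) ∈ Submodule.map ι (Submodule.span ℤ (Set.range w')) :=
            Submodule.mem_map_of_mem h1
          rw [Submodule.map_span, ← Set.range_comp] at h2
          rw [hker x (hlast x hx)] at h2
          exact h2
    · -- nonzero generator
      have hgI : g ∈ N.map π := by rw [← hI]; exact Submodule.IsPrincipal.generator_mem I
      obtain ⟨vtop, hvN, hvg⟩ : ∃ y ∈ N, π y = g := Submodule.mem_map.mp hgI
      set N₀ : Submodule ℤ (Fin (n+1) → ℤ) := N ⊓ LinearMap.ker π with hN₀
      obtain ⟨r, w', t', hmono, hpiv, hzero, hspan⟩ := IH (N₀.map ρ)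
      have hwN : ∀ l, ι (w' l) ∈ N₀ := by
        intro l
        obtain ⟨y, hyN, hyl⟩ : ∃ y ∈ N₀, ρ y = w' l := by
          have : w' l ∈ N₀.map ρ := by
            rw [← hspan]; exact Submodule.subset_span (Set.mem_range_self l)
          exact Submodule.mem_map.mp this
        have hylast : y (Fin.last n) = 0 := by
          have := hyN.2
          simpa [hπ] using this
        have : ι (w' l) = y := by rw [← hyl]; exact hker y hylast
        rw [this]; exact hyN
      refine ⟨r+1, Fin.snoc (fun l => ι (w' l)) vtop,
        Fin.snoc (fun l => (t' l).castSucc) (Fin.last n), ?_, ?_, ?_, ?_⟩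
      · intro a c hac
        revert hac
        refine Fin.lastCases ?_ (fun c' => ?_) c <;> intro hac
        · have ha : a ≠ Fin.last r := ne_of_lt hac
          obtain ⟨a', rfl⟩ := Fin.exists_castSucc_eq.mpr ha
          rw [Fin.snoc_castSucc, Fin.snoc_last]
          exact Fin.castSucc_lt_last _
        · have hc' : a < Fin.castSucc c' := hac
          have ha : a ≠ Fin.last r := ne_of_lt (lt_of_lt_of_le hc' (Fin.castSucc_lt_last c').le)
          obtain ⟨a', rfl⟩ := Fin.exists_castSucc_eq.mpr ha
          rw [Fin.snoc_castSucc, Fin.snoc_castSucc]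
          exact Fin.castSucc_lt_castSucc_iff.mpr (hmono (Fin.castSucc_lt_castSucc_iff.mp hc'))
      · intro l
        refine Fin.lastCases ?_ (fun l' => ?_) l
        · rw [Fin.snoc_last, Fin.snoc_last]
          have hvl : vtop (Fin.last n) = g := hvg
          rw [hvl]; exact hg0
        · rw [Fin.snoc_castSucc, Fin.snoc_castSucc]
          show (Fin.snoc (w' l') 0 : Fin (n+1) → ℤ) _ ≠ 0
          rw [Fin.snoc_castSucc]
          exact hpiv l'
      · intro l s hs
        revert hs
        refine Fin.lastCases ?_ (fun l' => ?_) l <;> intro hs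
        · rw [Fin.snoc_last] at hs
          exact absurd (Fin.le_last s) (not_le.mpr hs)
        · rw [Fin.snoc_castSucc] at hs
          rw [Fin.snoc_castSucc]
          revert hs
          refine Fin.lastCases ?_ (fun s' => ?_) s <;> intro hs
          · show (Fin.snoc (w' l') 0 : Fin (n+1) → ℤ) _ = 0
            rw [Fin.snoc_last]
          · show (Fin.snoc (w' l') 0 : Fin (n+1) → ℤ) _ = 0
            rw [Fin.snoc_castSucc]
            exact hzero l' s' (Fin.castSucc_lt_castSucc_iff.mp hs)
      · apply le_antisymm
        · rw [Submodule.span_le]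
          rintro - ⟨l, rfl⟩
          refine Fin.lastCases ?_ (fun l' => ?_) l
          · rw [Fin.snoc_last]; exact hvN
          · rw [Fin.snoc_castSucc]
            exact (hwN l').1
        · intro x hx
          have hxI : π x ∈ I := Submodule.mem_map_of_mem hx
          rw [← hIg] at hxI
          obtain ⟨q, hq⟩ := Submodule.mem_span_singleton.mp hxI
          set y := x - q • vtop with hy
          have hyN : y ∈ N₀ := by
            refine Submodule.mem_inf.mpr ⟨?_, ?_⟩
            · exact Submodule.sub_mem N hx (Submodule.smul_mem N q hvN)
            · rw [LinearMap.mem_ker, hy, map_sub, _root_.map_smul, hvg, hq]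
              simp
          have h1 : ρ y ∈ Submodule.span ℤ (Set.range w') := by
            rw [hspan]; exact Submodule.mem_map_of_mem hyN
          have h2 : ι (ρ y) ∈ Submodule.map ι (Submodule.span ℤ (Set.range w')) :=
            Submodule.mem_map_of_mem h1
          rw [Submodule.map_span, ← Set.range_comp] at h2
          have hylast : y (Fin.last n) = 0 := by
            have := hyN.2
            simpa [hπ] using this
          rw [hker y hylast] at h2
          have hsub : Set.range (ι ∘ w') ⊆
              Set.range (Fin.snoc (fun l => ι (w' l)) vtop : Fin (r+1) → Fin (n+1) → ℤ) := by
            rintro - ⟨l, rfl⟩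
            exact ⟨Fin.castSucc l, by rw [Fin.snoc_castSucc]; rfl⟩
          have h3 : y ∈ Submodule.span ℤ
              (Set.range (Fin.snoc (fun l => ι (w' l)) vtop : Fin (r+1) → Fin (n+1) → ℤ)) :=
            Submodule.span_mono hsub h2
          have h4 : vtop ∈ Submodule.span ℤ
              (Set.range (Fin.snoc (fun l => ι (w' l)) vtop : Fin (r+1) → Fin (n+1) → ℤ)) :=
            Submodule.subset_span ⟨Fin.last r, by rw [Fin.snoc_last]⟩
          have : x = y + q • vtop := by rw [hy]; ring
          rw [this]
          exact Submodule.add_mem _ h3 (Submodule.smul_mem _ q h4)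

section bridge

variable {m n r j : ℕ}

lemma inner_b_gso_self (b : Fin n → EuclideanSpace ℝ (Fin m)) (s : Fin n) :
    ⟪b s, gso b s⟫ = ‖gso b s‖ ^ 2 := by
  conv_lhs => rw [b_eq_sum b s]
  rw [sum_inner, Finset.sum_eq_single s]
  · rw [real_inner_smul_left, real_inner_self_eq_norm_sq]
    have hTss : Tmat b s s = 1 := by simp [Tmat]
    rw [hTss, one_mul]
  · intro r _ hr; rw [real_inner_smul_left, gso_orth b hr]; ring
  · simp

lemma echelon_coeffs_zero (w : Fin r → Fin n → ℤ) (t : Fin r → Fin n)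
    (hmono : StrictMono t) (hpiv : ∀ l, w l (t l) ≠ 0)
    (hzero : ∀ l s, t l < s → w l s = 0)
    (x : Fin r → ℝ) (hx : ∀ s, ∑ l, x l * (w l s : ℝ) = 0) : ∀ l, x l = 0 := by
  have main : ∀ l : Fin r, (∀ l', l < l' → x l' = 0) → x l = 0 := by
    intro l hl'
    have h0 := hx (t l)
    rw [Finset.sum_eq_single l] at h0
    · have hw : (w l (t l) : ℝ) ≠ 0 := Int.cast_ne_zero.mpr (hpiv l)
      exact (mul_eq_zero.mp h0).resolve_right hw
    · intro l' _ hne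
      rcases lt_or_gt_of_ne hne with h | h
      · rw [hzero l' (t l) (hmono h), Int.cast_zero, mul_zero]
      · rw [hl' l' h, zero_mul]
    · simp
  have key : ∀ p : ℕ, ∀ l : Fin r, r ≤ (l : ℕ) + p + 1 → x l = 0 := by
    intro p
    induction p with
    | zero =>
      intro l hl
      refine main l (fun l' h => ?_)
      have h1 : (l : ℕ) < (l' : ℕ) := h
      exact absurd l'.2 (by omega)
    | succ p IH =>
      intro l hl
      refine main l (fun l' h => ?_)
      have h1 : (l : ℕ) < (l' : ℕ) := h
      exact IH l' (by omega)
  intro l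
  exact key r l (by omega)

lemma swap_sum (b : Fin n → EuclideanSpace ℝ (Fin m)) (w : Fin r → Fin n → ℤ)
    (y : Fin r → ℝ) :
    ∑ l, y l • (∑ s, (w l s : ℝ) • b s) = ∑ s, (∑ l, y l * (w l s : ℝ)) • b s := by
  calc ∑ l, y l • (∑ s, (w l s : ℝ) • b s)
      = ∑ l, ∑ s, (y l * (w l s : ℝ)) • b s := by
        refine Finset.sum_congr rfl fun l _ => ?_
        rw [Finset.smul_sum]
        exact Finset.sum_congr rfl fun s _ => (smul_smul _ _ _)
    _ = ∑ s, ∑ l, (y l * (w l s : ℝ)) • b s := Finset.sum_comm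
    _ = ∑ s, (∑ l, y l * (w l s : ℝ)) • b s := by
        refine Finset.sum_congr rfl fun s _ => ?_
        rw [Finset.sum_smul]

lemma gso_pivot (b : Fin n → EuclideanSpace ℝ (Fin m))
    (w : Fin r → Fin n → ℤ) (t : Fin r → Fin n)
    (hmono : StrictMono t) (hpiv : ∀ l, w l (t l) ≠ 0)
    (hzero : ∀ l s, t l < s → w l s = 0) (l : Fin r) :
    ‖gso b (t l)‖ ^ 2 ≤ ‖gso (fun l' => ∑ s, (w l' s : ℝ) • b s) l‖ ^ 2 := by
  haveI : WellFoundedLT (Fin r) := inferInstance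
  set g : Fin r → EuclideanSpace ℝ (Fin m) := fun l' => ∑ s, (w l' s : ℝ) • b s with hgdef
  have h1 : ∀ l', l' < l → ⟪g l', gso b (t l)⟫ = 0 := by
    intro l' hl'
    rw [hgdef]
    rw [sum_inner]
    refine Finset.sum_eq_zero fun s _ => ?_
    rw [real_inner_smul_left]
    by_cases hws : w l' s = 0
    · rw [hws]; simp
    · have hs : s ≤ t l' := not_lt.mp (fun h => hws (hzero l' s h))
      rw [inner_b_gso_zero b (lt_of_le_of_lt hs (hmono hl'))]
      ring
  have h2 : ⟪g l, gso b (t l)⟫ = (w l (t l) : ℝ) * ‖gso b (t l)‖ ^ 2 := by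
    rw [hgdef, sum_inner, Finset.sum_eq_single (t l)]
    · rw [real_inner_smul_left, inner_b_gso_self]
    · intro s _ hne
      rcases lt_or_gt_of_ne hne with h | h
      · rw [real_inner_smul_left, inner_b_gso_zero b h]; ring
      · rw [hzero l s h]; simp
    · simp
  have hW : ∀ x ∈ Submodule.span ℝ (g '' Set.Iio l), ⟪x, gso b (t l)⟫ = 0 := by
    intro x hx
    induction hx using Submodule.span_induction with
    | mem x hxg =>
      obtain ⟨l', hl', rfl⟩ := hxg
      exact h1 l' hl'
    | zero => exact inner_zero_left _
    | add x y _ _ hx hy => rw [inner_add_left, hx, hy, add_zero]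
    | smul a x _ hx => rw [real_inner_smul_left, hx, mul_zero]
  have hdecomp : gso g l = g l - ∑ l' ∈ Finset.Iio l,
      ((ℝ ∙ gso g l').starProjection (g l) : EuclideanSpace ℝ (Fin m)) :=
    gramSchmidt_def ℝ g l
  have hp : (∑ l' ∈ Finset.Iio l,
      ((ℝ ∙ gso g l').starProjection (g l) : EuclideanSpace ℝ (Fin m)))
      ∈ Submodule.span ℝ (g '' Set.Iio l) := by
    refine Submodule.sum_mem _ fun l' hl' => ?_
    have hl'' : l' < l := Finset.mem_Iio.mp hl'
    have h3 : gso g l' ∈ Submodule.span ℝ (g '' Set.Iic l') :=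
      gramSchmidt_mem_span ℝ g (le_refl l')
    have h4 : Submodule.span ℝ (g '' Set.Iic l') ≤ Submodule.span ℝ (g '' Set.Iio l) :=
      Submodule.span_mono (Set.image_mono fun a ha => lt_of_le_of_lt ha hl'')
    have h5 : (ℝ ∙ gso g l') ≤ Submodule.span ℝ (g '' Set.Iio l) := by
      rw [Submodule.span_singleton_le_iff_mem]; exact h4 h3
    exact h5 ((ℝ ∙ gso g l').orthogonalProjectionOnto (g l)).2
  have hinner : ⟪gso g l, gso b (t l)⟫ = (w l (t l) : ℝ) * ‖gso b (t l)‖ ^ 2 := by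
    rw [hdecomp, inner_sub_left, h2, hW _ hp, sub_zero]
  have habs : (1:ℝ) ≤ |(w l (t l) : ℝ)| := by
    have := Int.one_le_abs (hpiv l)
    exact_mod_cast this
  have hcs := abs_real_inner_le_norm (gso g l) (gso b (t l))
  rw [hinner, abs_mul] at hcs
  have hb2 : |‖gso b (t l)‖ ^ 2| = ‖gso b (t l)‖ ^ 2 := abs_of_nonneg (sq_nonneg _)
  rw [hb2] at hcs
  rcases eq_or_lt_of_le (norm_nonneg (gso b (t l))) with h0 | h0
  · rw [← h0]; simp
  · have hle : ‖gso b (t l)‖ ≤ ‖gso g l‖ := by nlinarith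
    nlinarith

lemma cast_sum_smul {q n : ℕ} (w : Fin q → Fin n → ℤ) (y : Fin q → ℤ) (z : Fin n → ℤ)
    (hz : ∑ l, y l • w l = z) (s : Fin n) :
    (z s : ℝ) = ∑ l, (y l : ℝ) * (w l s : ℝ) := by
  have h := congrFun hz s
  rw [Finset.sum_apply] at h
  simp only [Pi.smul_apply, smul_eq_mul] at h
  rw [← h]
  push_cast
  ring

lemma sublattice_det_bound (b : Fin n → EuclideanSpace ℝ (Fin m))
    (hb : LinearIndependent ℝ b)
    (d : Fin j → EuclideanSpace ℝ (Fin m)) (hd : LinearIndependent ℝ d)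
    (hdL : ∀ i, ∃ c : Fin n → ℤ, d i = ∑ s, (c s : ℝ) • b s) :
    ∃ t : Fin j → Fin n, StrictMono t ∧
      (∏ l : Fin j, ‖gso b (t l)‖ ^ 2) ≤ (Matrix.of fun i i' => ⟪d i, d i'⟫).det := by
  choose c hc using hdL
  obtain ⟨r, w, t, hmono, hpiv, hzero, hspan⟩ := echelon n (Submodule.span ℤ (Set.range c))
  set g : Fin r → EuclideanSpace ℝ (Fin m) := fun l => ∑ s, (w l s : ℝ) • b s with hgdef
  have hcw : ∀ i, ∃ A : Fin r → ℤ, ∑ l, A l • w l = c i := by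
    intro i
    have hmem : c i ∈ Submodule.span ℤ (Set.range w) := by
      rw [hspan]; exact Submodule.subset_span (Set.mem_range_self i)
    exact (Submodule.mem_span_range_iff_exists_fun ℤ).mp hmem
  choose A hA using hcw
  have hdg : ∀ i, d i = ∑ l, (A i l : ℝ) • g l := by
    intro i
    rw [hc i, hgdef, swap_sum b w (fun l => (A i l : ℝ))]
    exact Finset.sum_congr rfl fun s _ => by rw [cast_sum_smul w (A i) (c i) (hA i) s]
  have hglin : LinearIndependent ℝ g := by
    rw [Fintype.linearIndependent_iff]
    intro x hx
    rw [hgdef, swap_sum b w x] at hx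
    have hcoef := Fintype.linearIndependent_iff.mp hb _ hx
    exact echelon_coeffs_zero w t hmono hpiv hzero x hcoef
  have hgd : ∀ l, g l ∈ Submodule.span ℝ (Set.range d) := by
    intro l
    have hmem : w l ∈ Submodule.span ℤ (Set.range c) := by
      rw [← hspan]; exact Submodule.subset_span (Set.mem_range_self l)
    obtain ⟨B, hB⟩ := (Submodule.mem_span_range_iff_exists_fun ℤ).mp hmem
    have hgl : g l = ∑ i, (B i : ℝ) • d i := by
      have : ∑ i, (B i : ℝ) • d i = ∑ s, (∑ i, (B i : ℝ) * (c i s : ℝ)) • b s := by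
        rw [← swap_sum b c (fun i => (B i : ℝ))]
        exact Finset.sum_congr rfl fun i _ => by rw [hc i]
      rw [this, hgdef]
      exact Finset.sum_congr rfl fun s _ => by rw [← cast_sum_smul c B (w l) hB s]
    rw [hgl]
    exact Submodule.sum_mem _ fun i _ =>
      Submodule.smul_mem _ _ (Submodule.subset_span (Set.mem_range_self i))
  have hdq : ∀ i, d i ∈ Submodule.span ℝ (Set.range g) := by
    intro i
    rw [hdg i]
    exact Submodule.sum_mem _ fun l _ =>
      Submodule.smul_mem _ _ (Submodule.subset_span (Set.mem_range_self l))
  have hspan_eq : Submodule.span ℝ (Set.range g) = Submodule.span ℝ (Set.range d) := by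
    apply le_antisymm
    · rw [Submodule.span_le]; rintro - ⟨l, rfl⟩; exact hgd l
    · rw [Submodule.span_le]; rintro - ⟨i, rfl⟩; exact hdq i
  have hrj : r = j := by
    have e1 : Module.finrank ℝ (Submodule.span ℝ (Set.range d)) = j := by
      rw [finrank_span_eq_card hd, Fintype.card_fin]
    have e2 : Module.finrank ℝ (Submodule.span ℝ (Set.range g)) = r := by
      rw [finrank_span_eq_card hglin, Fintype.card_fin]
    rw [← e2, hspan_eq, e1]
  subst hrj
  have hfact : (Matrix.of fun i i' => (⟪d i, d i'⟫ : ℝ))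
      = (Matrix.of fun i l => (A i l : ℤ)).map (Int.cast : ℤ → ℝ)
        * (Matrix.of fun l l' => (⟪g l, g l'⟫ : ℝ))
        * ((Matrix.of fun i l => (A i l : ℤ)).map (Int.cast : ℤ → ℝ))ᵀ := by
    ext i i'
    have hL : (⟪d i, d i'⟫ : ℝ) = ∑ l, ∑ l', (A i l : ℝ) * (A i' l' : ℝ) * ⟪g l, g l'⟫ := by
      rw [hdg i, hdg i', sum_inner]
      refine Finset.sum_congr rfl fun l _ => ?_
      rw [real_inner_smul_left, inner_sum, Finset.mul_sum]
      refine Finset.sum_congr rfl fun l' _ => ?_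
      rw [real_inner_smul_right]; ring
    show (⟪d i, d i'⟫ : ℝ) = _
    rw [hL, Finset.sum_comm, Matrix.mul_apply]
    refine Finset.sum_congr rfl fun l' _ => ?_
    rw [Matrix.mul_apply, Finset.sum_mul]
    refine Finset.sum_congr rfl fun l _ => ?_
    simp only [Matrix.map_apply, Matrix.transpose_apply, Matrix.of_apply]
    ring
  have hdet : (Matrix.of fun i i' => (⟪d i, d i'⟫ : ℝ)).det
      = (((Matrix.of fun i l => (A i l : ℤ)).det : ℤ) : ℝ) ^ 2
        * (Matrix.of fun l l' => (⟪g l, g l'⟫ : ℝ)).det := by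
    have hmd : ((Matrix.of fun i l => (A i l : ℤ)).map (Int.cast : ℤ → ℝ)).det
        = (((Matrix.of fun i l => (A i l : ℤ)).det : ℤ) : ℝ) := by
      rw [show (Int.cast : ℤ → ℝ) = ⇑(Int.castRingHom ℝ) from rfl]
      exact (RingHom.map_det (Int.castRingHom ℝ) _).symm
    rw [hfact, Matrix.det_mul, Matrix.det_mul, Matrix.det_transpose, hmd]
    ring
  have hGdet : (Matrix.of fun l l' => (⟪g l, g l'⟫ : ℝ)).det = ∏ l, ‖gso g l‖ ^ 2 :=
    detGram_eq_prod g
  have hDpos : 0 < (Matrix.of fun i i' => (⟪d i, d i'⟫ : ℝ)).det := by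
    rw [detGram_eq_prod d]
    refine Finset.prod_pos fun l _ => ?_
    have hne : gso d l ≠ 0 := by
      haveI : WellFoundedLT (Fin r) := inferInstance
      exact gramSchmidt_ne_zero l hd
    exact pow_pos (norm_pos_iff.mpr hne) 2
  have hAne : (Matrix.of fun i l => (A i l : ℤ)).det ≠ 0 := by
    intro h0
    rw [h0, Int.cast_zero, zero_pow (by norm_num : (2:ℕ) ≠ 0), zero_mul] at hdet
    rw [hdet] at hDpos
    exact lt_irrefl _ hDpos
  have hA1 : (1:ℝ) ≤ (((Matrix.of fun i l => (A i l : ℤ)).det : ℤ) : ℝ) ^ 2 := by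
    have h1 : (1 : ℤ) ≤ (Matrix.of fun i l => (A i l : ℤ)).det ^ 2 := by
      have := Int.one_le_abs hAne
      nlinarith [sq_abs ((Matrix.of fun i l => (A i l : ℤ)).det)]
    exact_mod_cast h1
  have hGlow : (∏ l : Fin r, ‖gso b (t l)‖ ^ 2) ≤ ∏ l, ‖gso g l‖ ^ 2 :=
    Finset.prod_le_prod (fun l _ => sq_nonneg _)
      (fun l _ => gso_pivot b w t hmono hpiv hzero l)
  refine ⟨t, hmono, ?_⟩
  have hGnn : (0:ℝ) ≤ ∏ l, ‖gso g l‖ ^ 2 := Finset.prod_nonneg fun l _ => sq_nonneg _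
  calc (∏ l : Fin r, ‖gso b (t l)‖ ^ 2) ≤ ∏ l, ‖gso g l‖ ^ 2 := hGlow
    _ ≤ (((Matrix.of fun i l => (A i l : ℤ)).det : ℤ) : ℝ) ^ 2 * ∏ l, ‖gso g l‖ ^ 2 := by
        nlinarith
    _ = (Matrix.of fun i i' => (⟪d i, d i'⟫ : ℝ)).det := by rw [hdet, hGdet]

end bridge

section finmono

lemma strictMono_val_le {j n : ℕ} (t : Fin j → Fin n) (hmono : StrictMono t) :
    ∀ l : Fin j, (l : ℕ) ≤ (t l : ℕ) := by
  have key : ∀ p : ℕ, ∀ l : Fin j, (l : ℕ) = p → p ≤ (t l : ℕ) := by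
    intro p
    induction p with
    | zero => intro l _; exact Nat.zero_le _
    | succ p IH =>
      intro l hl
      have hp : p < j := by omega
      have h1 : p ≤ ((t ⟨p, hp⟩ : Fin n) : ℕ) := IH ⟨p, hp⟩ rfl
      have hlt : (⟨p, hp⟩ : Fin j) < l := by
        rw [Fin.lt_def]; show p < (l : ℕ); omega
      have h2 := hmono hlt
      rw [Fin.lt_def] at h2
      omega
  intro l; exact key (l : ℕ) l rfl

lemma strictMono_val_add {j n : ℕ} (t : Fin j → Fin n) (hmono : StrictMono t) :
    ∀ q : ℕ, ∀ l : Fin j, ∀ h : (l : ℕ) + q < j, (t l : ℕ) + q ≤ (t ⟨(l : ℕ) + q, h⟩ : ℕ) := by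
  intro q
  induction q with
  | zero =>
    intro l h
    have he : (⟨(l : ℕ) + 0, h⟩ : Fin j) = l := by ext; simp
    rw [he]
    omega
  | succ q IH =>
    intro l h
    have h' : (l : ℕ) + q < j := by omega
    have h1 := IH l h'
    have hlt : (⟨(l : ℕ) + q, h'⟩ : Fin j) < ⟨(l : ℕ) + (q+1), h⟩ := by
      rw [Fin.lt_def]; show (l : ℕ) + q < (l : ℕ) + (q+1); omega
    have h2 := hmono hlt
    rw [Fin.lt_def] at h2
    omega

lemma strictMono_val_upper {j n : ℕ} (t : Fin j → Fin n) (hmono : StrictMono t) (hj : 1 ≤ j) :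
    ∀ l : Fin j, (t l : ℕ) + (j - 1 - (l : ℕ)) ≤ n - 1 := by
  intro l
  have hl : (l : ℕ) < j := l.2
  have hh : (l : ℕ) + (j - 1 - (l : ℕ)) < j := by omega
  have h := strictMono_val_add t hmono (j - 1 - (l : ℕ)) l hh
  have h2 : ((t ⟨(l : ℕ) + (j - 1 - (l : ℕ)), hh⟩ : Fin n) : ℕ) < n := (t _).2
  omega

end finmono


theorem det_prefix_le_rpow_sublattice_det {m n k j : ℕ} (hk1 : 1 ≤ k) (hkj : k ≤ j)
    (hjn : j ≤ n)
    (b : Fin n → EuclideanSpace ℝ (Fin m))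
    (hb : LinearIndependent ℝ b) (hred : LLLReduced b)
    (d : Fin j → EuclideanSpace ℝ (Fin m))
    (hd : LinearIndependent ℝ d) (hdL : ∀ i, inLattice b (d i)) :
    latticeDet (fun i : Fin k => b (Fin.castLE (hkj.trans hjn) i)) ≤
      2 ^ ((k : ℝ) * ((n : ℝ) - j) / 2 + (k : ℝ) * ((j : ℝ) - k) / 4) *
        latticeDet d ^ ((k : ℝ) / j) := by
  have hkn : k ≤ n := hkj.trans hjn
  have hj1 : 1 ≤ j := hk1.trans hkj
  -- beta function on ℕ
  set β : ℕ → ℝ := fun s => if h : s < n then ‖gso b ⟨s, h⟩‖ ^ 2 else 1 with hβ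
  have hβnn : ∀ s, 0 ≤ β s := by
    intro s; rw [hβ]; dsimp only
    split
    · exact sq_nonneg _
    · norm_num
  have hβeq : ∀ (s : Fin n), β (s : ℕ) = ‖gso b s‖ ^ 2 := by
    intro s
    rw [hβ]; dsimp only
    rw [dif_pos s.2]
  -- pairwise chain bound on β
  have hchain : ∀ p q : ℕ, ∀ (hq : q < n), p ≤ q → β p ≤ 2 ^ (q - p) * β q := by
    intro p q hq hpq
    have hp : p < n := lt_of_le_of_lt hpq hq
    rw [hβ]; dsimp only
    rw [dif_pos hp, dif_pos hq]
    exact gso_chain b hred (show (⟨p, hp⟩ : Fin n) ≤ ⟨q, hq⟩ from hpq)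
  -- P, Q, R, X
  set P : ℝ := ∏ i ∈ Finset.range k, β i with hP
  set Q : ℝ := ∏ l ∈ Finset.range j, β l with hQ
  set R : ℝ := ∏ l ∈ Finset.Ico k j, β l with hR
  set X : ℝ := (Matrix.of fun i i' => (⟪d i, d i'⟫ : ℝ)).det with hX
  have hPnn : 0 ≤ P := Finset.prod_nonneg fun i _ => hβnn i
  have hQnn : 0 ≤ Q := Finset.prod_nonneg fun i _ => hβnn i
  have hXnn : 0 ≤ X := by
    rw [hX, detGram_eq_prod d]
    exact Finset.prod_nonneg fun l _ => sq_nonneg _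
  have hPQR : P * R = Q := Finset.prod_range_mul_prod_Ico β hkj
  -- LHS as sqrt of P
  have hLHS : latticeDet (fun i : Fin k => b (Fin.castLE hkn i)) = Real.sqrt P := by
    simp only [latticeDet]
    congr 1
    have hfac : ∀ l : Fin k, ‖gso (fun i : Fin k => b (Fin.castLE hkn i)) l‖ ^ 2 = β (l : ℕ) := by
      intro l
      rw [gso_castLE b hkn l]
      rw [show β ((l : Fin k) : ℕ) = β ((Fin.castLE hkn l : Fin n) : ℕ) from rfl]
      exact (hβeq (Fin.castLE hkn l)).symm
    rw [detGram_eq_prod (fun i : Fin k => b (Fin.castLE hkn i)),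
      Finset.prod_congr rfl (fun l (_ : l ∈ Finset.univ) => hfac l), hP]
    exact Fin.prod_univ_eq_prod_range (fun s => β s) k
  have hRHSd : latticeDet d = Real.sqrt X := rfl
  -- sublattice bound
  obtain ⟨t, hmono, hbound⟩ := sublattice_det_bound b hb d hd hdL
  -- step 1 : Q ≤ 2^((n-j)*j) * X
  have hstep1 : Q ≤ 2 ^ ((n - j) * j) * X := by
    have hterm : ∀ l : Fin j, β (l : ℕ) ≤ 2 ^ (n - j) * ‖gso b (t l)‖ ^ 2 := by
      intro l
      have h1 : (l : ℕ) ≤ (t l : ℕ) := strictMono_val_le t hmono l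
      have h2 := strictMono_val_upper t hmono hj1 l
      have h3 : (t l : ℕ) - (l : ℕ) ≤ n - j := by have := l.2; omega
      have h4 := hchain (l : ℕ) ((t l : ℕ)) (t l).2 h1
      have h5 : (2:ℝ) ^ ((t l : ℕ) - (l : ℕ)) ≤ 2 ^ (n - j) :=
        pow_le_pow_right₀ one_le_two h3
      have h6 : β ((t l : ℕ)) = ‖gso b (t l)‖ ^ 2 := hβeq (t l)
      rw [h6] at h4
      nlinarith [sq_nonneg ‖gso b (t l)‖]
    have hQfin : Q = ∏ l : Fin j, β (l : ℕ) :=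
      (Fin.prod_univ_eq_prod_range (fun s => β s) j).symm
    calc Q = ∏ l : Fin j, β (l : ℕ) := hQfin
      _ ≤ ∏ l : Fin j, (2 ^ (n - j) * ‖gso b (t l)‖ ^ 2) :=
          Finset.prod_le_prod (fun l _ => hβnn _) (fun l _ => hterm l)
      _ = 2 ^ ((n - j) * j) * ∏ l : Fin j, ‖gso b (t l)‖ ^ 2 := by
          rw [Finset.prod_mul_distrib, Finset.prod_const, Finset.card_univ,
            Fintype.card_fin, ← pow_mul]
      _ ≤ 2 ^ ((n - j) * j) * X :=
          mul_le_mul_of_nonneg_left hbound (by positivity)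
  -- step 2 : P^(j-k) ≤ 2^S * R^k
  set S : ℕ := ∑ i ∈ Finset.range k, ∑ l ∈ Finset.Ico k j, (l - i) with hS
  have hstep2 : P ^ (j - k) ≤ 2 ^ S * R ^ k := by
    have hPexp : P ^ (j - k) = ∏ i ∈ Finset.range k, ∏ l ∈ Finset.Ico k j, β i := by
      rw [hP, ← Finset.prod_pow]
      refine Finset.prod_congr rfl fun i _ => ?_
      rw [Finset.prod_const, Nat.card_Ico]
    have hRexp : (2:ℝ) ^ S * R ^ k
        = ∏ i ∈ Finset.range k, ∏ l ∈ Finset.Ico k j, ((2:ℝ) ^ (l - i) * β l) := by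
      have h1 : ∀ i : ℕ, (∏ l ∈ Finset.Ico k j, ((2:ℝ) ^ (l - i) * β l))
          = (2:ℝ) ^ (∑ l ∈ Finset.Ico k j, (l - i)) * R := by
        intro i
        rw [Finset.prod_mul_distrib, Finset.prod_pow_eq_pow_sum, hR]
      rw [Finset.prod_congr rfl fun i (_ : i ∈ Finset.range k) => h1 i]
      rw [Finset.prod_mul_distrib, Finset.prod_pow_eq_pow_sum, Finset.prod_const,
        Finset.card_range, hS]
    rw [hPexp, hRexp]
    refine Finset.prod_le_prod (fun i _ => Finset.prod_nonneg fun l _ => hβnn i) ?_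
    intro i hi
    refine Finset.prod_le_prod (fun l _ => hβnn i) ?_
    intro l hl
    have hik := Finset.mem_range.mp hi
    obtain ⟨hkl, hlj⟩ := Finset.mem_Ico.mp hl
    exact hchain i l (lt_of_lt_of_le hlj hjn) (le_trans (le_of_lt hik) hkl)
  -- S identity
  have hSid : 2 * (S:ℤ) = (k:ℤ) * (j:ℤ) * ((j:ℤ) - (k:ℤ)) := by
    have hcastS : (S:ℤ) = ∑ i ∈ Finset.range k, ∑ l ∈ Finset.Ico k j, ((l:ℤ) - (i:ℤ)) := by
      rw [hS, Nat.cast_sum]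
      refine Finset.sum_congr rfl fun i hi => ?_
      rw [Nat.cast_sum]
      refine Finset.sum_congr rfl fun l hl => ?_
      have hik := Finset.mem_range.mp hi
      have hkl := (Finset.mem_Ico.mp hl).1
      rw [Nat.cast_sub (by omega)]
    have hinner : ∀ i ∈ Finset.range k, ∑ l ∈ Finset.Ico k j, ((l:ℤ) - (i:ℤ))
        = (∑ l ∈ Finset.Ico k j, (l:ℤ)) - ((j:ℤ) - (k:ℤ)) * (i:ℤ) := by
      intro i _
      rw [Finset.sum_sub_distrib, Finset.sum_const, Nat.card_Ico, nsmul_eq_mul,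
        Nat.cast_sub hkj]
    have e1 : (S:ℤ) = (k:ℤ) * (∑ l ∈ Finset.Ico k j, (l:ℤ))
        - ((j:ℤ) - (k:ℤ)) * (∑ i ∈ Finset.range k, (i:ℤ)) := by
      rw [hcastS, Finset.sum_congr rfl hinner, Finset.sum_sub_distrib,
        Finset.sum_const, Finset.card_range, nsmul_eq_mul, ← Finset.mul_sum]
    have e2 : (∑ l ∈ Finset.Ico k j, (l:ℤ))
        = (∑ l ∈ Finset.range j, (l:ℤ)) - ∑ l ∈ Finset.range k, (l:ℤ) :=
      Finset.sum_Ico_eq_sub _ hkj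
    have hgauss : ∀ q : ℕ, 1 ≤ q → 2 * (∑ l ∈ Finset.range q, (l:ℤ)) = (q:ℤ) * (q:ℤ) - q := by
      intro q hq
      have h := Finset.sum_range_id_mul_two q
      have h2 := congrArg (Nat.cast : ℕ → ℤ) h
      push_cast [Nat.cast_sub hq] at h2
      linear_combination h2
    have e3 := hgauss j hj1
    have e4 := hgauss k hk1
    linear_combination 2*e1 + 2*(k:ℤ)*e2 + (k:ℤ)*e3 - (j:ℤ)*e4
  -- combine into natural-power inequality
  have hPj : P ^ j ≤ 2 ^ S * Q ^ k := by
    have hsplit : P ^ j = P ^ k * P ^ (j - k) := by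
      rw [← pow_add]; congr 1; omega
    have h1 : P ^ k * P ^ (j-k) ≤ P ^ k * (2 ^ S * R ^ k) :=
      mul_le_mul_of_nonneg_left hstep2 (pow_nonneg hPnn k)
    have h2 : P ^ k * ((2:ℝ) ^ S * R ^ k) = 2 ^ S * Q ^ k := by
      rw [← hPQR, mul_pow]; ring
    rw [hsplit, ← h2]; exact h1
  have hfinal : P ^ (2*j) ≤ 2 ^ (2*S + (n-j)*j*(2*k)) * X ^ (2*k) := by
    have hPjnn : 0 ≤ P ^ j := pow_nonneg hPnn j
    have hsq : P ^ (2*j) = (P ^ j) ^ 2 := by rw [show 2*j = j*2 by ring, pow_mul]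
    have h3 : (P ^ j) ^ 2 ≤ ((2:ℝ) ^ S * Q ^ k) ^ 2 := pow_le_pow_left₀ hPjnn hPj 2
    have h4 : ((2:ℝ) ^ S * Q ^ k) ^ 2 = 2 ^ (2*S) * Q ^ (2*k) := by
      rw [mul_pow, ← pow_mul, ← pow_mul, mul_comm S 2, mul_comm k 2]
    have h6 : Q ^ (2*k) ≤ ((2:ℝ) ^ ((n-j)*j) * X) ^ (2*k) := pow_le_pow_left₀ hQnn hstep1 (2*k)
    have h7 : ((2:ℝ) ^ ((n-j)*j) * X) ^ (2*k) = 2 ^ ((n-j)*j*(2*k)) * X ^ (2*k) := by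
      rw [mul_pow, ← pow_mul]
    calc P ^ (2*j) = (P^j)^2 := hsq
      _ ≤ ((2:ℝ)^S * Q^k)^2 := h3
      _ = 2^(2*S) * Q^(2*k) := h4
      _ ≤ 2^(2*S) * (2^((n-j)*j*(2*k)) * X^(2*k)) := by
          refine mul_le_mul_of_nonneg_left (h6.trans_eq h7) ?_
          positivity
      _ = 2^(2*S + (n-j)*j*(2*k)) * X^(2*k) := by rw [pow_add]; ring
  -- final rpow manipulation
  rw [hLHS, hRHSd]
  have hjR : (0:ℝ) < (j:ℝ) := by exact_mod_cast hj1
  refine le_of_pow_le_pow_left₀ (n := 4*j) (by omega) (by positivity) ?_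
  have hL4 : Real.sqrt P ^ (4*j) = P ^ (2*j) := by
    rw [show 4*j = 2*(2*j) by ring, pow_mul, Real.sq_sqrt hPnn]
  have hSidR : 2 * (S:ℝ) = (k:ℝ) * (j:ℝ) * ((j:ℝ) - (k:ℝ)) := by exact_mod_cast hSid
  have hR4 : ((2:ℝ) ^ ((k : ℝ) * ((n : ℝ) - j) / 2 + (k : ℝ) * ((j : ℝ) - k) / 4) *
        Real.sqrt X ^ ((k : ℝ) / j)) ^ (4*j)
      = 2 ^ (2*S + (n-j)*j*(2*k)) * X ^ (2*k) := by
    rw [mul_pow]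
    congr 1
    · rw [← Real.rpow_natCast ((2:ℝ) ^ ((k : ℝ) * ((n : ℝ) - j) / 2
        + (k : ℝ) * ((j : ℝ) - k) / 4)) (4*j),
        ← Real.rpow_mul (by norm_num : (0:ℝ) ≤ 2)]
      rw [show ((k : ℝ) * ((n : ℝ) - j) / 2 + (k : ℝ) * ((j : ℝ) - k) / 4) * ((4*j : ℕ) : ℝ)
          = ((2*S + (n-j)*j*(2*k) : ℕ) : ℝ) by
        push_cast [Nat.cast_sub hjn]
        nlinarith [hSidR]]
      rw [Real.rpow_natCast]
    · rw [← Real.rpow_natCast (Real.sqrt X ^ ((k:ℝ)/j)) (4*j),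
        ← Real.rpow_mul (Real.sqrt_nonneg X)]
      rw [show (k:ℝ)/j * ((4*j : ℕ) : ℝ) = ((4*k : ℕ) : ℝ) by
        push_cast
        field_simp]
      rw [Real.rpow_natCast]
      rw [show 4*k = 2*(2*k) by ring, pow_mul, Real.sq_sqrt hXnn]
  rw [hL4, hR4]
  exact hfinal
end
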